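/- Lower bound on trace-distance contraction under local qubit depolarizing noise: let 0 ≤ p < 1/2 and let D_p be the qubit depolarizing channel D_p(ρ) = (1−p)ρ + p·Tr(ρ)·I/2. Then for any two density operators ρ, σ on k qubits, ‖ρ − σ‖₁ ≤ (1/(1−2p))^k · ‖D_p^{⊗k}(ρ) − D_p^{⊗k}(σ)‖₁. Consequently, for a circuit A = D_p^{⊗k} ∘ U_n ∘ ⋯ ∘ D_p^{⊗k} ∘ U_1 with n layers in which each U_i acts as conjugation by a unitary, E₁(A(ρ)‖A(σ)) ≥ (1/2)·(1−2p)^{kn}·‖ρ − σ‖₁. -/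

import Mathlib

open scoped BigOperators ComplexOrder

/-- Trace of the positive part of a Hermitian matrix (0 if not Hermitian). -/
noncomputable def posPartTrace {n : Type*} [Fintype n] [DecidableEq n]
    (X : Matrix n n ℂ) : ℝ :=
  if h : X.IsHermitian then ∑ i, max (h.eigenvalues i) 0 else 0

/-- The quantum hockey-stick divergence `E_γ(ρ‖σ) = Tr[(ρ - γσ)₊]`. -/
noncomputable def hsDiv {n : Type*} [Fintype n] [DecidableEq n]
    (γ : ℝ) (ρ σ : Matrix n n ℂ) : ℝ :=
  posPartTrace (ρ - (γ : ℂ) • σ)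

/-- A density operator: positive semidefinite with unit trace. -/
def IsDensity {n : Type*} [Fintype n] [DecidableEq n] (ρ : Matrix n n ℂ) : Prop :=
  ρ.PosSemidef ∧ ρ.trace = 1

/-- Trace norm: the sum of the singular values. -/
noncomputable def traceNorm {n : Type*} [Fintype n] [DecidableEq n]
    (X : Matrix n n ℂ) : ℝ :=
  ∑ i, Real.sqrt ((Matrix.posSemidef_conjTranspose_mul_self X).isHermitian.eigenvalues i)

/-- Completely positive trace-preserving linear map. -/
def IsCPTP {n m : Type*} [Fintype n] [DecidableEq n] [Fintype m] [DecidableEq m]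
    (Φ : Matrix n n ℂ →ₗ[ℂ] Matrix m m ℂ) : Prop :=
  (∀ k : ℕ, ∀ X : Matrix (Fin k × n) (Fin k × n) ℂ, X.PosSemidef →
      (Matrix.of fun p q : Fin k × m =>
        Φ (Matrix.of fun i j => X (p.1, i) (q.1, j)) p.2 q.2).PosSemidef) ∧
  (∀ X, (Φ X).trace = X.trace)

/-- Contraction coefficient of a channel for the hockey-stick divergence. -/
noncomputable def contractionCoeff {n : Type*} [Fintype n] [DecidableEq n]
    (γ : ℝ) (Φ : Matrix n n ℂ →ₗ[ℂ] Matrix n n ℂ) : ℝ :=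
  sSup {x : ℝ | ∃ ρ σ : Matrix n n ℂ, IsDensity ρ ∧ IsDensity σ ∧
    0 < hsDiv γ ρ σ ∧ x = hsDiv γ (Φ ρ) (Φ σ) / hsDiv γ ρ σ}

/-- The depolarizing channel with parameter `p` acting on site `j` of a composite system
of `k` subsystems, each of dimension `D`:
`ρ ↦ (1-p) ρ + p (Tr_j ρ) ⊗_j (I/D)`. -/
noncomputable def depolSite (D k : ℕ) (p : ℝ) (j : Fin k) :
    Matrix (Fin k → Fin D) (Fin k → Fin D) ℂ →ₗ[ℂ]
      Matrix (Fin k → Fin D) (Fin k → Fin D) ℂ where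
  toFun X := Matrix.of fun a b =>
    (1 - (p : ℂ)) * X a b +
      ((p : ℂ) / D) * (if a j = b j then
        ∑ s : Fin D, X (Function.update a j s) (Function.update b j s) else 0)
  map_add' X Y := by
    ext a b
    by_cases h : a j = b j <;>
      simp [h, Matrix.add_apply, Finset.sum_add_distrib, mul_add] <;> ring
  map_smul' c X := by
    ext a b
    by_cases h : a j = b j <;>
      simp [h, Matrix.smul_apply, Finset.mul_sum, smul_eq_mul, mul_add] <;> ring

/-- The `k`-fold tensor power `D_p^{⊗k}` of the depolarizing channel, realized as the
composition of the single-site depolarizing channels on all `k` sites. -/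
noncomputable def depolPow (D k : ℕ) (p : ℝ) :
    Matrix (Fin k → Fin D) (Fin k → Fin D) ℂ →ₗ[ℂ]
      Matrix (Fin k → Fin D) (Fin k → Fin D) ℂ :=
  (List.finRange k).foldl (fun acc j => depolSite D k p j ∘ₗ acc) LinearMap.id

/-- The noisy unitary circuit `A = D_p^{⊗k} ∘ U_n ∘ ⋯ ∘ D_p^{⊗k} ∘ U_1` on `k` qubits,
where each layer acts by conjugation with the unitary `U i`. -/
noncomputable def noisyUnitaryCircuit (k n : ℕ) (p : ℝ)
    (U : Fin n → Matrix (Fin k → Fin 2) (Fin k → Fin 2) ℂ)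
    (ρ : Matrix (Fin k → Fin 2) (Fin k → Fin 2) ℂ) :
    Matrix (Fin k → Fin 2) (Fin k → Fin 2) ℂ :=
  (List.finRange n).foldl (fun X i => depolPow 2 k p (U i * X * (U i).conjTranspose)) ρ


set_option linter.unusedSectionVars false

namespace HSAux

open Matrix

variable {m : Type*} [Fintype m] [DecidableEq m]

/-- Functional calculus of a Hermitian matrix via its spectral decomposition. -/
noncomputable def cfcH {A : Matrix m m ℂ} (hA : A.IsHermitian) (f : ℝ → ℝ) : Matrix m m ℂ :=
  (hA.eigenvectorUnitary : Matrix m m ℂ) *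
    Matrix.diagonal (fun i => (f (hA.eigenvalues i) : ℂ)) *
      star (hA.eigenvectorUnitary : Matrix m m ℂ)

variable {A : Matrix m m ℂ} (hA : A.IsHermitian) (f g : ℝ → ℝ)

lemma cfcH_id : cfcH hA (fun x => x) = A := by
  rw [cfcH]
  conv_rhs => rw [hA.spectral_theorem]
  rfl

lemma cfcH_isHermitian : (cfcH hA f).IsHermitian := by
  unfold Matrix.IsHermitian cfcH
  simp only [star_eq_conjTranspose, conjTranspose_mul, conjTranspose_conjTranspose,
    diagonal_conjTranspose]
  rw [mul_assoc]
  congr 2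
  ext i j
  simp [Matrix.diagonal, Pi.star_def, Complex.conj_ofReal]

lemma cfcH_mul : cfcH hA f * cfcH hA g = cfcH hA (fun x => f x * g x) := by
  unfold cfcH
  have h1 : star (hA.eigenvectorUnitary : Matrix m m ℂ) * (hA.eigenvectorUnitary : Matrix m m ℂ) = 1 :=
    hA.eigenvectorUnitary.2.1
  calc (hA.eigenvectorUnitary : Matrix m m ℂ) * Matrix.diagonal (fun i => (f (hA.eigenvalues i) : ℂ)) *
          star (hA.eigenvectorUnitary : Matrix m m ℂ) *
        ((hA.eigenvectorUnitary : Matrix m m ℂ) * Matrix.diagonal (fun i => (g (hA.eigenvalues i) : ℂ)) *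
          star (hA.eigenvectorUnitary : Matrix m m ℂ))
      = (hA.eigenvectorUnitary : Matrix m m ℂ) *
          (Matrix.diagonal (fun i => (f (hA.eigenvalues i) : ℂ)) *
            Matrix.diagonal (fun i => (g (hA.eigenvalues i) : ℂ))) *
          star (hA.eigenvectorUnitary : Matrix m m ℂ) := by
        simp only [mul_assoc]
        congr 2
        rw [← mul_assoc (star (hA.eigenvectorUnitary : Matrix m m ℂ)), h1, one_mul]
    _ = _ := by
        rw [diagonal_mul_diagonal]
        congr 2
        ext i
        push_cast
        ring

lemma trace_cfcH : (cfcH hA f).trace = ((∑ i, f (hA.eigenvalues i) : ℝ) : ℂ) := by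
  unfold cfcH
  rw [Matrix.trace_mul_cycle, hA.eigenvectorUnitary.2.1, one_mul, trace_diagonal]
  push_cast
  rfl

lemma cfcH_congr (h : ∀ i, f (hA.eigenvalues i) = g (hA.eigenvalues i)) :
    cfcH hA f = cfcH hA g := by
  unfold cfcH
  congr 2
  ext i j
  by_cases hij : i = j <;> simp [Matrix.diagonal, hij, h i, h j]

lemma cfcH_posSemidef (h : ∀ i, 0 ≤ f (hA.eigenvalues i)) : (cfcH hA f).PosSemidef := by
  have hd : (Matrix.diagonal (fun i => (f (hA.eigenvalues i) : ℂ))).PosSemidef :=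
    Matrix.posSemidef_diagonal_iff.mpr fun i => by exact_mod_cast h i
  have := hd.mul_mul_conjTranspose_same (hA.eigenvectorUnitary : Matrix m m ℂ)
  simpa [cfcH, Matrix.star_eq_conjTranspose] using this



lemma quad_conj (U C : Matrix m m ℂ) (v : m → ℂ) :
    star v ⬝ᵥ (U * C * star U) *ᵥ v
      = star (star U *ᵥ v) ⬝ᵥ C *ᵥ (star U *ᵥ v) := by
  rw [star_mulVec, ← Matrix.mulVec_mulVec, ← Matrix.mulVec_mulVec,
    Matrix.dotProduct_mulVec (star v) U, Matrix.star_eq_conjTranspose,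
    Matrix.conjTranspose_conjTranspose]

lemma norm_conj {U : Matrix m m ℂ} (hU : U ∈ Matrix.unitaryGroup m ℂ) (v : m → ℂ) :
    star (star U *ᵥ v) ⬝ᵥ (star U *ᵥ v) = star v ⬝ᵥ v := by
  have h := quad_conj U 1 v
  rw [mul_one, (Matrix.mem_unitaryGroup_iff).mp hU] at h
  simp only [Matrix.one_mulVec] at h
  rw [← h]

lemma dot_self_eq (v : m → ℂ) : star v ⬝ᵥ v = ((∑ i, Complex.normSq (v i) : ℝ) : ℂ) := by
  push_cast
  simp [dotProduct, Complex.normSq_eq_conj_mul_self]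

lemma quad_diagonal (d : m → ℝ) (w : m → ℂ) :
    star w ⬝ᵥ (Matrix.diagonal (fun i => (d i : ℂ))) *ᵥ w
      = ((∑ i, d i * Complex.normSq (w i) : ℝ) : ℂ) := by
  push_cast
  simp only [dotProduct, Matrix.mulVec_diagonal, Pi.star_apply]
  congr 1
  ext i
  simp only [Complex.normSq_eq_conj_mul_self, Pi.star_apply, Complex.star_def]
  ring


lemma quad_cfcH (v : m → ℂ) :
    star v ⬝ᵥ (cfcH hA f) *ᵥ v
      = ((∑ i, f (hA.eigenvalues i) *
          Complex.normSq ((star (hA.eigenvectorUnitary : Matrix m m ℂ) *ᵥ v) i) : ℝ) : ℂ) := by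
  rw [cfcH, quad_conj, quad_diagonal]

/-- Hermitian "contraction" in the quadratic-form sense. -/
def Contr (C : Matrix m m ℂ) : Prop :=
  C.IsHermitian ∧ ∀ v : m → ℂ, ‖star v ⬝ᵥ C *ᵥ v‖ ≤ ∑ i, Complex.normSq (v i)

lemma contr_neg {C : Matrix m m ℂ} (hC : Contr C) : Contr (-C) := by
  refine ⟨hC.1.neg, fun v => ?_⟩
  rw [Matrix.neg_mulVec, dotProduct_neg, norm_neg]
  exact hC.2 v

lemma contr_cfcH (h : ∀ i, |f (hA.eigenvalues i)| ≤ 1) : Contr (cfcH hA f) := by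
  refine ⟨cfcH_isHermitian hA f, fun v => ?_⟩
  rw [quad_cfcH]
  set w := (star (hA.eigenvectorUnitary : Matrix m m ℂ) *ᵥ v) with hw
  have hnorm : ∑ i, Complex.normSq (w i) = ∑ i, Complex.normSq (v i) := by
    have := norm_conj hA.eigenvectorUnitary.2 v
    rw [dot_self_eq, dot_self_eq] at this
    exact_mod_cast this
  calc ‖((∑ i, f (hA.eigenvalues i) * Complex.normSq (w i) : ℝ) : ℂ)‖
      = |∑ i, f (hA.eigenvalues i) * Complex.normSq (w i)| := by
        rw [Complex.norm_real, Real.norm_eq_abs]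
    _ ≤ ∑ i, |f (hA.eigenvalues i) * Complex.normSq (w i)| := Finset.abs_sum_le_sum_abs _ _
    _ ≤ ∑ i, Complex.normSq (w i) := by
        refine Finset.sum_le_sum fun i _ => ?_
        rw [abs_mul, abs_of_nonneg (Complex.normSq_nonneg _)]
        exact mul_le_of_le_one_left (Complex.normSq_nonneg _) (h i)
    _ = ∑ i, Complex.normSq (v i) := hnorm

/-- Trace norm of a Hermitian matrix as the sum of absolute values of eigenvalues. -/
noncomputable def tn (A : Matrix m m ℂ) : ℝ :=
  if h : A.IsHermitian then ∑ i, |h.eigenvalues i| else 0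

lemma tn_eq : tn A = ∑ i, |hA.eigenvalues i| := dif_pos hA

lemma tn_nonneg (B : Matrix m m ℂ) : 0 ≤ tn B := by
  unfold tn
  split
  · exact Finset.sum_nonneg fun i _ => abs_nonneg _
  · exact le_refl 0

include hA in
lemma trace_mul_contr_le {C : Matrix m m ℂ} (hC : Contr C) :
    ((A * C).trace).re ≤ tn A := by
  rw [tn_eq hA]
  have e1 : (A * C).trace =
      (Matrix.diagonal (RCLike.ofReal ∘ hA.eigenvalues : m → ℂ) *
        (star (hA.eigenvectorUnitary : Matrix m m ℂ) * C *
          (hA.eigenvectorUnitary : Matrix m m ℂ))).trace := by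
    conv_lhs => rw [hA.spectral_theorem]
    calc ((hA.eigenvectorUnitary : Matrix m m ℂ) *
            Matrix.diagonal (RCLike.ofReal ∘ hA.eigenvalues : m → ℂ) *
            star (hA.eigenvectorUnitary : Matrix m m ℂ) * C).trace
        = ((hA.eigenvectorUnitary : Matrix m m ℂ) *
            (Matrix.diagonal (RCLike.ofReal ∘ hA.eigenvalues : m → ℂ) *
              (star (hA.eigenvectorUnitary : Matrix m m ℂ) * C))).trace := by
          rw [mul_assoc, mul_assoc]
      _ = ((Matrix.diagonal (RCLike.ofReal ∘ hA.eigenvalues : m → ℂ) *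
              (star (hA.eigenvectorUnitary : Matrix m m ℂ) * C)) *
            (hA.eigenvectorUnitary : Matrix m m ℂ)).trace := Matrix.trace_mul_comm _ _
      _ = _ := by rw [mul_assoc]
  set V := (hA.eigenvectorUnitary : Matrix m m ℂ) with hV
  rw [e1]
  have hdiag : (Matrix.diagonal (RCLike.ofReal ∘ hA.eigenvalues : m → ℂ) *
      (star V * C * V)).trace
      = ∑ i, (hA.eigenvalues i : ℂ) * (star V * C * V) i i := by
    simp [Matrix.trace, Matrix.diagonal_mul, Matrix.diag]
  rw [hdiag]
  have hquad : ∀ i, (star V * C * V) i i = star (fun r => V r i) ⬝ᵥ C *ᵥ (fun r => V r i) := by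
    intro i
    simp only [Matrix.mul_apply, dotProduct, Matrix.mulVec, Pi.star_apply,
      Matrix.star_apply, Finset.sum_mul, Finset.mul_sum]
    rw [Finset.sum_comm]
    refine Finset.sum_congr rfl fun r _ => Finset.sum_congr rfl fun s _ => ?_
    simp [Matrix.star_apply]
    ring
  have hcol : ∀ i, ∑ r, Complex.normSq (V r i) = 1 := by
    intro i
    have h1 : (star V * V) i i = 1 := by
      rw [hA.eigenvectorUnitary.2.1]
      simp
    have h2 : (star V * V) i i = ((∑ r, Complex.normSq (V r i) : ℝ) : ℂ) := by
      push_cast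
      simp [Matrix.mul_apply, Complex.normSq_eq_conj_mul_self, Matrix.star_apply]
    rw [h2] at h1
    exact_mod_cast h1
  have hre : ((∑ i, (hA.eigenvalues i : ℂ) * (star V * C * V) i i).re)
      = ∑ i, hA.eigenvalues i * ((star V * C * V) i i).re := by
    rw [Complex.re_sum]
    exact Finset.sum_congr rfl fun i _ => by
      rw [Complex.mul_re, Complex.ofReal_re, Complex.ofReal_im]
      ring
  rw [hre]
  refine Finset.sum_le_sum fun i _ => ?_
  have hb : |((star V * C * V) i i).re| ≤ 1 := by
    have h2 := hC.2 (fun r => V r i)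
    rw [hcol i] at h2
    calc |((star V * C * V) i i).re| ≤ ‖(star V * C * V) i i‖ :=
          Complex.abs_re_le_norm _
      _ ≤ 1 := by rw [hquad i]; exact h2
  calc hA.eigenvalues i * ((star V * C * V) i i).re
      ≤ |hA.eigenvalues i * ((star V * C * V) i i).re| := le_abs_self _
    _ = |hA.eigenvalues i| * |((star V * C * V) i i).re| := abs_mul _ _
    _ ≤ |hA.eigenvalues i| * 1 := mul_le_mul_of_nonneg_left hb (abs_nonneg _)
    _ = |hA.eigenvalues i| := mul_one _

/-- Sign function. -/
noncomputable def sgnf : ℝ → ℝ := fun x => if 0 ≤ x then 1 else -1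

lemma sgnf_abs_le (x : ℝ) : |sgnf x| ≤ 1 := by
  unfold sgnf; split <;> norm_num

lemma mul_sgnf (x : ℝ) : x * sgnf x = |x| := by
  unfold sgnf
  split
  · rw [mul_one, abs_of_nonneg ‹_›]
  · rw [abs_of_neg (lt_of_not_ge ‹_›)]; ring

include hA in
lemma trace_mul_sgn : (A * cfcH hA sgnf).trace = ((tn A : ℝ) : ℂ) := by
  have h := cfcH_mul hA (fun x => x) sgnf
  rw [cfcH_id hA] at h
  rw [h, cfcH_congr hA _ (fun x => |x|) (fun i => mul_sgnf _), trace_cfcH, tn_eq hA]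

include hA in
lemma exists_contr : ∃ C : Matrix m m ℂ, Contr C ∧ ((A * C).trace).re = tn A :=
  ⟨cfcH hA sgnf, contr_cfcH hA sgnf (fun i => sgnf_abs_le _), by
    rw [trace_mul_sgn hA, Complex.ofReal_re]⟩

include hA in
lemma trace_re_eq : (A.trace).re = ∑ i, hA.eigenvalues i := by
  have h := trace_cfcH hA (fun x => x)
  rw [cfcH_id hA] at h
  rw [h, Complex.ofReal_re]

lemma tn_psd {B : Matrix m m ℂ} (hB : B.PosSemidef) : tn B = (B.trace).re := by
  rw [tn_eq hB.1, trace_re_eq hB.1]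
  exact Finset.sum_congr rfl fun i _ => abs_of_nonneg (hB.eigenvalues_nonneg i)

lemma tn_sub_le {B C : Matrix m m ℂ} (hB : B.IsHermitian) (hC : C.IsHermitian) :
    tn (B - C) ≤ tn B + tn C := by
  obtain ⟨E, hE, hEq⟩ := exists_contr (hB.sub hC)
  rw [← hEq, sub_mul, Matrix.trace_sub, Complex.sub_re, sub_eq_add_neg]
  refine add_le_add (trace_mul_contr_le hB hE) ?_
  have : -((C * E).trace).re = ((C * (-E)).trace).re := by
    rw [mul_neg, Matrix.trace_neg, Complex.neg_re]
  rw [this]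
  exact trace_mul_contr_le hC (contr_neg hE)

include hA in
lemma cfcH_sub : cfcH hA f - cfcH hA g = cfcH hA (fun x => f x - g x) := by
  unfold cfcH
  rw [← sub_mul, ← mul_sub]
  congr 2
  ext i j
  by_cases h : i = j <;> simp [Matrix.sub_apply, Matrix.diagonal, h]

include hA in
lemma exists_jordan : ∃ P N : Matrix m m ℂ, P.PosSemidef ∧ N.PosSemidef ∧
    A = P - N ∧ tn A = (P.trace).re + (N.trace).re := by
  refine ⟨cfcH hA (fun x => max x 0), cfcH hA (fun x => max (-x) 0),
    cfcH_posSemidef hA _ (fun i => le_max_right _ _),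
    cfcH_posSemidef hA _ (fun i => le_max_right _ _), ?_, ?_⟩
  · rw [cfcH_sub, cfcH_congr hA _ (fun x => x) (fun i => by
      rcases le_total 0 (hA.eigenvalues i) with h | h
      · rw [max_eq_left h, max_eq_right (by linarith)]; ring
      · rw [max_eq_right h, max_eq_left (by linarith)]; ring), cfcH_id]
  · rw [tn_eq hA]
    have h1 : ((cfcH hA (fun x => max x 0)).trace).re = ∑ i, max (hA.eigenvalues i) 0 := by
      rw [trace_cfcH, Complex.ofReal_re]
    have h2 : ((cfcH hA (fun x => max (-x) 0)).trace).re = ∑ i, max (-(hA.eigenvalues i)) 0 := by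
      rw [trace_cfcH, Complex.ofReal_re]
    rw [h1, h2, ← Finset.sum_add_distrib]
    exact Finset.sum_congr rfl fun i _ => by
      rcases le_total 0 (hA.eigenvalues i) with h | h
      · rw [abs_of_nonneg h, max_eq_left h, max_eq_right (by linarith)]; ring
      · rw [abs_of_nonpos h, max_eq_right h, max_eq_left (by linarith)]; ring

lemma herm_conj {U B : Matrix m m ℂ} (hB : B.IsHermitian) :
    (U * B * star U).IsHermitian := by
  unfold Matrix.IsHermitian
  simp only [Matrix.star_eq_conjTranspose, Matrix.conjTranspose_mul,
    Matrix.conjTranspose_conjTranspose, hB.eq]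
  rw [mul_assoc]

lemma contr_conj {U C : Matrix m m ℂ} (hU : U ∈ Matrix.unitaryGroup m ℂ) (hC : Contr C) :
    Contr (U * C * star U) := by
  refine ⟨herm_conj hC.1, fun v => ?_⟩
  rw [quad_conj]
  calc ‖star (star U *ᵥ v) ⬝ᵥ C *ᵥ (star U *ᵥ v)‖
      ≤ ∑ i, Complex.normSq ((star U *ᵥ v) i) := hC.2 _
    _ = ∑ i, Complex.normSq (v i) := by
        have h := norm_conj hU v
        rw [dot_self_eq, dot_self_eq] at h
        exact_mod_cast h

lemma tn_conj {U : Matrix m m ℂ} (hU : U ∈ Matrix.unitaryGroup m ℂ)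
    {B : Matrix m m ℂ} (hB : B.IsHermitian) : tn (U * B * star U) = tn B := by
  have hUU : star U * U = 1 := hU.1
  have hUU' : U * star U = 1 := hU.2
  apply le_antisymm
  · obtain ⟨C, hC, hEq⟩ := exists_contr (herm_conj (U := U) hB)
    rw [← hEq]
    have htr : ((U * B * star U) * C).trace = (B * (star U * C * U)).trace := by
      calc ((U * B * star U) * C).trace = (U * (B * (star U * C))).trace := by
            congr 1
            noncomm_ring
        _ = ((B * (star U * C)) * U).trace := Matrix.trace_mul_comm _ _
        _ = (B * (star U * C * U)).trace := by congr 1; noncomm_ring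
    rw [htr]
    have hC' : Contr (star U * C * U) := by
      have := contr_conj (Unitary.star_mem hU) hC
      rwa [star_star] at this
    exact trace_mul_contr_le hB hC'
  · obtain ⟨C, hC, hEq⟩ := exists_contr hB
    rw [← hEq]
    have htr : (B * C).trace = ((U * B * star U) * (U * C * star U)).trace := by
      have e : (U * B * star U) * (U * C * star U) = U * (B * C) * star U := by
        calc (U * B * star U) * (U * C * star U)
            = U * B * (star U * U) * C * star U := by noncomm_ring
          _ = U * (B * C) * star U := by rw [hUU, mul_one, mul_assoc U B C]
      have e2 : star U * (U * (B * C)) = B * C := by rw [← mul_assoc, hUU, one_mul]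
      rw [e]
      conv_rhs => rw [Matrix.trace_mul_comm]
      rw [e2]
    rw [htr]
    exact trace_mul_contr_le (herm_conj hB) (contr_conj hU hC)

end HSAux

namespace HSAux
open Matrix
set_option linter.unusedSectionVars false
variable {m : Type*} [Fintype m] [DecidableEq m]

lemma traceNorm_eq_tn {X : Matrix m m ℂ} (hX : X.IsHermitian) : traceNorm X = tn X := by
  have hE := Matrix.posSemidef_conjTranspose_mul_self X
  have hT : (cfcH hE.1 Real.sqrt).PosSemidef :=
    cfcH_posSemidef hE.1 _ (fun i => Real.sqrt_nonneg _)
  have hS : (cfcH hX (fun x => |x|)).PosSemidef :=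
    cfcH_posSemidef hX _ (fun i => abs_nonneg _)
  have hsq : cfcH hE.1 Real.sqrt ^ 2 = cfcH hX (fun x => |x|) ^ 2 := by
    rw [sq, sq, cfcH_mul, cfcH_mul]
    rw [cfcH_congr hE.1 _ (fun x => x)
      (fun i => Real.mul_self_sqrt (hE.eigenvalues_nonneg i)), cfcH_id]
    rw [cfcH_congr hX _ (fun x => x * x) (fun i => abs_mul_abs_self _)]
    have h2 : cfcH hX (fun x => x * x)
        = cfcH hX (fun x => x) * cfcH hX (fun x => x) := (cfcH_mul hX _ _).symm
    rw [h2, cfcH_id, hX.eq]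
  have heq : cfcH hE.1 Real.sqrt = cfcH hX (fun x => |x|) := by
    open scoped MatrixOrder in
    exact (CFC.sq_eq_sq_iff _ _ hT.nonneg hS.nonneg).mp hsq
  have htr := congrArg Matrix.trace heq
  rw [trace_cfcH, trace_cfcH] at htr
  have htr' : ∑ i, Real.sqrt (hE.1.eigenvalues i) = ∑ i, |hX.eigenvalues i| := by
    exact_mod_cast htr
  rw [traceNorm, tn_eq hX]
  exact htr'

lemma posPartTrace_eq {X : Matrix m m ℂ} (hX : X.IsHermitian) :
    posPartTrace X = (tn X + (X.trace).re) / 2 := by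
  rw [posPartTrace, dif_pos hX, tn_eq hX, trace_re_eq hX, ← Finset.sum_add_distrib,
    Finset.sum_div]
  exact Finset.sum_congr rfl fun i _ => by
    rcases le_total 0 (hX.eigenvalues i) with h | h
    · rw [max_eq_left h, abs_of_nonneg h]; ring
    · rw [max_eq_right h, abs_of_nonpos h]; ring

end HSAux

namespace HSAux
open Matrix

variable {D k : ℕ}

/-- `(Tr_j X) ⊗_j I`. -/
noncomputable def PT (j : Fin k) (X : Matrix (Fin k → Fin D) (Fin k → Fin D) ℂ) :
    Matrix (Fin k → Fin D) (Fin k → Fin D) ℂ :=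
  Matrix.of fun a b => if a j = b j then
    ∑ s : Fin D, X (Function.update a j s) (Function.update b j s) else 0

lemma PT_add (j : Fin k) (X Y : Matrix (Fin k → Fin D) (Fin k → Fin D) ℂ) :
    PT j (X + Y) = PT j X + PT j Y := by
  ext a b
  by_cases h : a j = b j <;> simp [PT, h, Finset.sum_add_distrib]

lemma PT_smul (j : Fin k) (c : ℂ) (X : Matrix (Fin k → Fin D) (Fin k → Fin D) ℂ) :
    PT j (c • X) = c • PT j X := by
  ext a b
  by_cases h : a j = b j <;> simp [PT, h, Finset.mul_sum]

lemma PT_sub (j : Fin k) (X Y : Matrix (Fin k → Fin D) (Fin k → Fin D) ℂ) :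
    PT j (X - Y) = PT j X - PT j Y := by
  ext a b
  by_cases h : a j = b j <;> simp [PT, h, Finset.sum_sub_distrib]

lemma PT_PT (j : Fin k) (X : Matrix (Fin k → Fin D) (Fin k → Fin D) ℂ) :
    PT j (PT j X) = (D : ℂ) • PT j X := by
  ext a b
  by_cases h : a j = b j
  · simp only [PT, Matrix.of_apply, h, if_true, Matrix.smul_apply, smul_eq_mul]
    have : ∀ s : Fin D, (if (Function.update a j s) j = (Function.update b j s) j then
        ∑ t : Fin D, X (Function.update (Function.update a j s) j t)
          (Function.update (Function.update b j s) j t) else 0)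
        = ∑ t : Fin D, X (Function.update a j t) (Function.update b j t) := by
      intro s
      simp [Function.update_self, Function.update_idem]
    rw [Finset.sum_congr rfl (fun s _ => this s), Finset.sum_const, Finset.card_univ,
      Fintype.card_fin, nsmul_eq_mul]
  · simp [PT, h]

lemma PT_herm {j : Fin k} {X : Matrix (Fin k → Fin D) (Fin k → Fin D) ℂ}
    (hX : X.IsHermitian) : (PT j X).IsHermitian := by
  ext a b
  simp only [Matrix.conjTranspose_apply, PT, Matrix.of_apply]
  by_cases h : a j = b j
  · rw [if_pos h.symm, if_pos h, star_sum]
    exact Finset.sum_congr rfl fun s _ => by rw [← Matrix.conjTranspose_apply, hX.eq]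
  · rw [if_neg (fun hh => h hh.symm), if_neg h, star_zero]

lemma sum_update_aux (j : Fin k) (f : (Fin k → Fin D) → ℂ) :
    (∑ q : Fin D × (Fin k → Fin D), f (Function.update q.2 j q.1))
      = (D : ℂ) * ∑ a, f a := by
  have hτ : Function.Involutive
      (fun q : Fin D × (Fin k → Fin D) => (q.2 j, Function.update q.2 j q.1)) := by
    intro q
    simp [Function.update_self, Function.update_idem, Function.update_eq_self]
  have := Fintype.sum_bijective _ hτ.bijective
    (fun q : Fin D × (Fin k → Fin D) => f (Function.update q.2 j q.1))
    (fun q : Fin D × (Fin k → Fin D) => f q.2) (fun q => rfl)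
  rw [this, Fintype.sum_prod_type]
  simp [Finset.sum_const, nsmul_eq_mul]

lemma PT_trace (j : Fin k) (X : Matrix (Fin k → Fin D) (Fin k → Fin D) ℂ) :
    (PT j X).trace = (D : ℂ) * X.trace := by
  unfold Matrix.trace Matrix.diag
  have h1 : ∑ a, (PT j X) a a = ∑ a, ∑ s : Fin D,
      X (Function.update a j s) (Function.update a j s) := by
    exact Finset.sum_congr rfl fun a _ => by simp [PT]
  rw [h1, ← sum_update_aux j (fun c => X c c)]
  rw [Fintype.sum_prod_type, Finset.sum_comm]

end HSAux

namespace HSAux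
open Matrix

namespace Quad

variable {D k : ℕ} (j : Fin k) (X : Matrix (Fin k → Fin D) (Fin k → Fin D) ℂ)
  (v : (Fin k → Fin D) → ℂ)

/-- Auxiliary vectors exhibiting `PT` as completely positive. -/
noncomputable def uvec (s t : Fin D) : (Fin k → Fin D) → ℂ :=
  fun c => if c j = s then v (Function.update c j t) else 0

noncomputable def F : (Fin D × (Fin k → Fin D) × (Fin k → Fin D)) → ℂ := fun p =>
  if p.2.1 j = p.2.2 j then
    (starRingEnd ℂ) (v p.2.1) *
      X (Function.update p.2.1 j p.1) (Function.update p.2.2 j p.1) * v p.2.2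
  else 0

noncomputable def G : (Fin D × (Fin k → Fin D) × (Fin k → Fin D)) → ℂ := fun p =>
  if p.2.1 j = p.2.2 j then
    (starRingEnd ℂ) (v (Function.update p.2.1 j p.1)) *
      X p.2.1 p.2.2 * v (Function.update p.2.2 j p.1)
  else 0

lemma lhs_eq : star v ⬝ᵥ (PT j X) *ᵥ v = ∑ p, F j X v p := by
  rw [Fintype.sum_prod_type]
  simp only [Fintype.sum_prod_type]
  rw [Finset.sum_comm]
  simp only [dotProduct, Matrix.mulVec, PT, Matrix.of_apply, Pi.star_apply,
    Complex.star_def, Finset.mul_sum]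
  refine Finset.sum_congr rfl fun a _ => ?_
  rw [Finset.sum_comm]
  refine Finset.sum_congr rfl fun b _ => ?_
  unfold F
  by_cases h : a j = b j
  · simp only [h, if_true, Finset.sum_mul, Finset.mul_sum]
    exact Finset.sum_congr rfl fun t _ => by ring
  · simp [h]

lemma rhs_eq : (∑ s : Fin D, ∑ t : Fin D,
    star (uvec j v s t) ⬝ᵥ X *ᵥ (uvec j v s t)) = ∑ p, G j X v p := by
  have step1 : ∀ s t : Fin D, star (uvec j v s t) ⬝ᵥ X *ᵥ (uvec j v s t)
      = ∑ c, ∑ d, (if c j = s then (if d j = s then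
          (starRingEnd ℂ) (v (Function.update c j t)) * X c d *
            v (Function.update d j t) else 0) else 0) := by
    intro s t
    simp only [dotProduct, Matrix.mulVec, uvec, Pi.star_apply, Complex.star_def,
      Finset.mul_sum]
    refine Finset.sum_congr rfl fun c _ => Finset.sum_congr rfl fun d _ => ?_
    by_cases hc : c j = s <;> by_cases hd : d j = s <;> simp [hc, hd] <;> ring
  simp only [step1]
  simp only [Fintype.sum_prod_type]
  conv_lhs => rw [Finset.sum_comm]
  refine Finset.sum_congr rfl fun t _ => ?_
  conv_lhs => rw [Finset.sum_comm]
  refine Finset.sum_congr rfl fun c _ => ?_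
  conv_lhs => rw [Finset.sum_comm]
  refine Finset.sum_congr rfl fun d _ => ?_
  unfold G
  by_cases h : c j = d j
  · rw [if_pos h]
    rw [Finset.sum_eq_single (c j)]
    · simp [h]
    · intro s _ hs
      rw [if_neg (fun hh => hs hh.symm)]
    · intro hmem
      exact absurd (Finset.mem_univ _) hmem
  · rw [if_neg h]
    apply Finset.sum_eq_zero
    intro s _
    by_cases hc : c j = s
    · rw [if_pos hc, if_neg (fun hd => h (hc.trans hd.symm))]
    · rw [if_neg hc]

lemma FG : ∑ p, F j X v p = ∑ p, G j X v p := by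
  rw [← Finset.sum_filter_add_sum_filter_not Finset.univ
    (fun p : Fin D × (Fin k → Fin D) × (Fin k → Fin D) => p.2.1 j = p.2.2 j) (F j X v),
    ← Finset.sum_filter_add_sum_filter_not Finset.univ
    (fun p : Fin D × (Fin k → Fin D) × (Fin k → Fin D) => p.2.1 j = p.2.2 j) (G j X v)]
  have hF0 : ∀ p ∈ Finset.univ.filter
      (fun p : Fin D × (Fin k → Fin D) × (Fin k → Fin D) => ¬ p.2.1 j = p.2.2 j),
      F j X v p = 0 := fun p hp => by
    rw [F, if_neg (Finset.mem_filter.mp hp).2]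
  have hG0 : ∀ p ∈ Finset.univ.filter
      (fun p : Fin D × (Fin k → Fin D) × (Fin k → Fin D) => ¬ p.2.1 j = p.2.2 j),
      G j X v p = 0 := fun p hp => by
    rw [G, if_neg (Finset.mem_filter.mp hp).2]
  rw [Finset.sum_eq_zero hF0, Finset.sum_eq_zero hG0]
  congr 1
  refine Finset.sum_nbij'
    (fun p => (p.2.1 j, Function.update p.2.1 j p.1, Function.update p.2.2 j p.1))
    (fun p => (p.2.1 j, Function.update p.2.1 j p.1, Function.update p.2.2 j p.1))
    ?_ ?_ ?_ ?_ ?_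
  · rintro ⟨t, a, b⟩ hp
    simp only [Finset.mem_filter, Finset.mem_univ, true_and] at hp ⊢
    simp [Function.update_self]
  · rintro ⟨t, a, b⟩ hp
    simp only [Finset.mem_filter, Finset.mem_univ, true_and] at hp ⊢
    simp [Function.update_self]
  · rintro ⟨t, a, b⟩ hp
    simp only [Finset.mem_filter, Finset.mem_univ, true_and] at hp
    have h1 : Function.update (Function.update a j t) j (a j) = a := by
      rw [Function.update_idem, Function.update_eq_self]
    have h2 : Function.update (Function.update b j t) j (a j) = b := by
      rw [Function.update_idem, hp, Function.update_eq_self]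
    simp [Function.update_self, h1, h2]
  · rintro ⟨t, a, b⟩ hp
    simp only [Finset.mem_filter, Finset.mem_univ, true_and] at hp
    have h1 : Function.update (Function.update a j t) j (a j) = a := by
      rw [Function.update_idem, Function.update_eq_self]
    have h2 : Function.update (Function.update b j t) j (a j) = b := by
      rw [Function.update_idem, hp, Function.update_eq_self]
    simp [Function.update_self, h1, h2]
  · rintro ⟨t, a, b⟩ hp
    simp only [Finset.mem_filter, Finset.mem_univ, true_and] at hp
    unfold F G
    have h1 : Function.update (Function.update a j t) j (a j) = a := by
      rw [Function.update_idem, Function.update_eq_self]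
    have h2 : Function.update (Function.update b j t) j (a j) = b := by
      rw [Function.update_idem, hp, Function.update_eq_self]
    rw [if_pos hp, if_pos (show (Function.update a j t) j = (Function.update b j t) j by
      simp [Function.update_self])]
    simp only [Function.update_self]
    rw [h1, h2]

lemma PT_quad : star v ⬝ᵥ (PT j X) *ᵥ v
    = ∑ s : Fin D, ∑ t : Fin D, star (uvec j v s t) ⬝ᵥ X *ᵥ (uvec j v s t) := by
  rw [lhs_eq, rhs_eq, FG]

end Quad

lemma PT_posSemidef {D k : ℕ} {j : Fin k} {X : Matrix (Fin k → Fin D) (Fin k → Fin D) ℂ}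
    (hX : X.PosSemidef) : (PT j X).PosSemidef := by
  refine Matrix.posSemidef_iff_dotProduct_mulVec.mpr ⟨PT_herm hX.1, fun v => ?_⟩
  rw [Quad.PT_quad]
  exact Finset.sum_nonneg fun s _ => Finset.sum_nonneg fun t _ => hX.dotProduct_mulVec_nonneg _

end HSAux

namespace HSAux
open Matrix
set_option linter.unusedSectionVars false

variable {m : Type*} [Fintype m] [DecidableEq m]

lemma herm_real_smul {c : ℝ} {B : Matrix m m ℂ} (hB : B.IsHermitian) :
    (((c : ℂ)) • B).IsHermitian := by
  unfold Matrix.IsHermitian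
  rw [Matrix.conjTranspose_smul, hB.eq, Complex.star_def, Complex.conj_ofReal]

lemma tn_PT_le {D k : ℕ} {j : Fin k} {X : Matrix (Fin k → Fin D) (Fin k → Fin D) ℂ}
    (hX : X.IsHermitian) : tn (PT j X) ≤ (D : ℝ) * tn X := by
  obtain ⟨P, N, hP, hN, hdec, htn⟩ := exists_jordan hX
  have hPT : PT j X = PT j P - PT j N := by rw [hdec, PT_sub]
  calc tn (PT j X) ≤ tn (PT j P) + tn (PT j N) := by
        rw [hPT]; exact tn_sub_le (PT_posSemidef hP).1 (PT_posSemidef hN).1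
    _ = ((PT j P).trace).re + ((PT j N).trace).re := by
        rw [tn_psd (PT_posSemidef hP), tn_psd (PT_posSemidef hN)]
    _ = (D : ℝ) * (P.trace).re + (D : ℝ) * (N.trace).re := by
        rw [PT_trace, PT_trace]
        simp [Complex.mul_re]
    _ = (D : ℝ) * tn X := by rw [htn]; ring

lemma depolSite_eq (D k : ℕ) (p : ℝ) (j : Fin k)
    (X : Matrix (Fin k → Fin D) (Fin k → Fin D) ℂ) :
    depolSite D k p j X = (((1 - p : ℝ)) : ℂ) • X + (((p / (D:ℝ) : ℝ)) : ℂ) • PT j X := by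
  ext a b
  by_cases h : a j = b j <;>
    simp [depolSite, PT, h, Matrix.add_apply, Matrix.smul_apply, smul_eq_mul] <;>
    push_cast <;> ring

lemma depolSite_herm {D k : ℕ} (p : ℝ) (j : Fin k)
    {X : Matrix (Fin k → Fin D) (Fin k → Fin D) ℂ} (hX : X.IsHermitian) :
    (depolSite D k p j X).IsHermitian := by
  rw [depolSite_eq]
  exact (herm_real_smul hX).add (herm_real_smul (PT_herm hX))

lemma depolSite_trace {D k : ℕ} (hD : (D:ℝ) ≠ 0) (p : ℝ) (j : Fin k)
    (X : Matrix (Fin k → Fin D) (Fin k → Fin D) ℂ) :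
    (depolSite D k p j X).trace = X.trace := by
  rw [depolSite_eq, Matrix.trace_add, Matrix.trace_smul, Matrix.trace_smul, PT_trace,
    smul_eq_mul, smul_eq_mul]
  have hD' : (D:ℂ) ≠ 0 := by exact_mod_cast (show ((D:ℝ):ℂ) ≠ 0 by exact_mod_cast hD)
  push_cast
  field_simp
  ring

lemma depolSite_inv {D k : ℕ} (hD : (D:ℝ) ≠ 0) (p : ℝ) (j : Fin k)
    (X : Matrix (Fin k → Fin D) (Fin k → Fin D) ℂ) :
    (((1 - p : ℝ)) : ℂ) • X
      = depolSite D k p j X - (((p / (D:ℝ) : ℝ)) : ℂ) • PT j (depolSite D k p j X) := by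
  have hD2 : (D:ℂ) ≠ 0 := by exact_mod_cast (show ((D:ℝ):ℂ) ≠ 0 by exact_mod_cast hD)
  rw [depolSite_eq, PT_add, PT_smul, PT_smul, PT_PT]
  rw [smul_add, smul_smul, smul_smul, smul_smul]
  rw [← add_smul]
  rw [show ((p / (D:ℝ) : ℝ) : ℂ) * ((1 - p : ℝ) : ℂ)
        + ((p / (D:ℝ) : ℝ) : ℂ) * ((p / (D:ℝ) : ℝ) : ℂ) * (D:ℂ)
      = ((p / (D:ℝ) : ℝ) : ℂ) from by push_cast; field_simp; ring]
  abel

lemma tn_depolSite_le {D k : ℕ} (hD : 0 < D) {p : ℝ} (hp0 : 0 ≤ p) (hp : p < 1/2)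
    {j : Fin k} {X : Matrix (Fin k → Fin D) (Fin k → Fin D) ℂ} (hX : X.IsHermitian) :
    tn X ≤ (1 / (1 - 2*p)) * tn (depolSite D k p j X) := by
  have hD' : (D:ℝ) ≠ 0 := by positivity
  set Y := depolSite D k p j X with hY
  have hYh : Y.IsHermitian := depolSite_herm p j hX
  have hPTYh : (PT j Y).IsHermitian := PT_herm hYh
  obtain ⟨C, hC, hEq⟩ := exists_contr hX
  have key : (1 - p) * tn X ≤ tn Y + (p / (D:ℝ)) * tn (PT j Y) := by
    have h1 : ((((1 - p : ℝ)) : ℂ) • X * C).trace.re = (1 - p) * tn X := by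
      rw [Matrix.smul_mul, Matrix.trace_smul, smul_eq_mul, ← hEq]
      simp [Complex.mul_re]
    have h2 : (((1 - p : ℝ) : ℂ) • X) * C
        = Y * C - (((p / (D:ℝ) : ℝ)) : ℂ) • (PT j Y * C) := by
      rw [depolSite_inv hD' p j X, Matrix.sub_mul, Matrix.smul_mul]
    rw [← h1, h2, Matrix.trace_sub, Matrix.trace_smul, Complex.sub_re, smul_eq_mul]
    have h3 : (Y * C).trace.re ≤ tn Y := trace_mul_contr_le hYh hC
    have h4 : -((((p / (D:ℝ) : ℝ)) : ℂ) * (PT j Y * C).trace).re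
        ≤ (p / (D:ℝ)) * tn (PT j Y) := by
      have h5 : ((PT j Y * (-C)).trace).re ≤ tn (PT j Y) :=
        trace_mul_contr_le hPTYh (contr_neg hC)
      have h6 : ((PT j Y * (-C)).trace).re = -((PT j Y * C).trace).re := by
        rw [mul_neg, Matrix.trace_neg, Complex.neg_re]
      rw [h6] at h5
      have h7 : ((((p / (D:ℝ) : ℝ)) : ℂ) * (PT j Y * C).trace).re
          = (p / (D:ℝ)) * ((PT j Y * C).trace).re := by
        simp [Complex.mul_re]
      rw [h7, ← mul_neg]
      exact mul_le_mul_of_nonneg_left h5 (by positivity)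
    linarith
  have hPTle : tn (PT j Y) ≤ (D:ℝ) * tn Y := tn_PT_le hYh
  have hDpos : (0:ℝ) < (D:ℝ) := by exact_mod_cast hD
  have h8 : (1 - p) * tn X ≤ (1 + p) * tn Y := by
    have : (p / (D:ℝ)) * tn (PT j Y) ≤ (p / (D:ℝ)) * ((D:ℝ) * tn Y) :=
      mul_le_mul_of_nonneg_left hPTle (by positivity)
    have he : (p / (D:ℝ)) * ((D:ℝ) * tn Y) = p * tn Y := by field_simp
    nlinarith
  have h1p : (0:ℝ) < 1 - p := by linarith
  have h2p : (0:ℝ) < 1 - 2*p := by linarith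
  have hYnn : 0 ≤ tn Y := tn_nonneg Y
  have hXnn : 0 ≤ tn X := tn_nonneg X
  rw [div_mul_eq_mul_div, le_div_iff₀ h2p, one_mul]
  nlinarith [mul_le_mul_of_nonneg_left h8 (le_of_lt h2p),
    mul_nonneg (mul_nonneg hp0 hp0) hYnn, h1p, hp0]

end HSAux

namespace HSAux
open Matrix
set_option linter.unusedSectionVars false

variable {m : Type*} [Fintype m] [DecidableEq m]

lemma foldl_linmap {ι : Type*} (l : List ι) (F : ι → (Matrix m m ℂ →ₗ[ℂ] Matrix m m ℂ))
    (g : Matrix m m ℂ →ₗ[ℂ] Matrix m m ℂ) (X : Matrix m m ℂ) :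
    (l.foldl (fun acc j => F j ∘ₗ acc) g) X = l.foldl (fun M j => F j M) (g X) := by
  induction l generalizing g with
  | nil => rfl
  | cons j l ih =>
      simp only [List.foldl_cons]
      rw [ih]
      rfl

lemma depolPow_apply (D k : ℕ) (p : ℝ) (X : Matrix (Fin k → Fin D) (Fin k → Fin D) ℂ) :
    depolPow D k p X
      = (List.finRange k).foldl (fun M j => depolSite D k p j M) X := by
  rw [depolPow, foldl_linmap]
  rfl

lemma site_fold {D k : ℕ} (hD : 0 < D) {p : ℝ} (hp0 : 0 ≤ p) (hp : p < 1/2)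
    (l : List (Fin k)) (X : Matrix (Fin k → Fin D) (Fin k → Fin D) ℂ)
    (hX : X.IsHermitian) :
    (l.foldl (fun M j => depolSite D k p j M) X).IsHermitian ∧
    (l.foldl (fun M j => depolSite D k p j M) X).trace = X.trace ∧
    tn X ≤ (1 / (1 - 2*p)) ^ l.length *
      tn (l.foldl (fun M j => depolSite D k p j M) X) := by
  induction l generalizing X with
  | nil => exact ⟨hX, rfl, by simp⟩
  | cons j l ih =>
      have hD' : (D:ℝ) ≠ 0 := by positivity
      have hYh : (depolSite D k p j X).IsHermitian := depolSite_herm p j hX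
      obtain ⟨h1, h2, h3⟩ := ih (depolSite D k p j X) hYh
      have hc : (0:ℝ) < 1 / (1 - 2*p) := by
        have : (0:ℝ) < 1 - 2*p := by linarith
        positivity
      refine ⟨h1, ?_, ?_⟩
      · rw [List.foldl_cons, h2, depolSite_trace hD' p j]
      · rw [List.foldl_cons]
        calc tn X ≤ (1 / (1 - 2*p)) * tn (depolSite D k p j X) :=
              tn_depolSite_le hD hp0 hp hX
          _ ≤ (1 / (1 - 2*p)) * ((1 / (1 - 2*p)) ^ l.length *
                tn (l.foldl (fun M j => depolSite D k p j M) (depolSite D k p j X))) :=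
              mul_le_mul_of_nonneg_left h3 hc.le
          _ = (1 / (1 - 2*p)) ^ (j :: l).length *
                tn (l.foldl (fun M j => depolSite D k p j M) (depolSite D k p j X)) := by
              rw [List.length_cons, pow_succ]
              ring

lemma tn_depolPow_le {D k : ℕ} (hD : 0 < D) {p : ℝ} (hp0 : 0 ≤ p) (hp : p < 1/2)
    {X : Matrix (Fin k → Fin D) (Fin k → Fin D) ℂ} (hX : X.IsHermitian) :
    (depolPow D k p X).IsHermitian ∧ (depolPow D k p X).trace = X.trace ∧
    tn X ≤ (1 / (1 - 2*p)) ^ k * tn (depolPow D k p X) := by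
  have h := site_fold hD hp0 hp (List.finRange k) X hX
  rw [depolPow_apply]
  simpa [List.length_finRange] using h

section Circuit

variable {k n : ℕ} {p : ℝ} (U : Fin n → Matrix (Fin k → Fin 2) (Fin k → Fin 2) ℂ)

lemma circuit_fold_sub (hU : ∀ i, U i ∈ Matrix.unitaryGroup (Fin k → Fin 2) ℂ)
    (l : List (Fin n)) (ρ σ : Matrix (Fin k → Fin 2) (Fin k → Fin 2) ℂ) :
    l.foldl (fun X i => depolPow 2 k p (U i * X * (U i).conjTranspose)) ρ -
      l.foldl (fun X i => depolPow 2 k p (U i * X * (U i).conjTranspose)) σ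
    = l.foldl (fun X i => depolPow 2 k p (U i * X * (U i).conjTranspose)) (ρ - σ) := by
  induction l generalizing ρ σ with
  | nil => rfl
  | cons i l ih =>
      simp only [List.foldl_cons]
      rw [ih]
      congr 1
      rw [← map_sub]
      congr 1
      noncomm_ring

lemma circuit_fold (hp0 : 0 ≤ p) (hp : p < 1/2)
    (hU : ∀ i, U i ∈ Matrix.unitaryGroup (Fin k → Fin 2) ℂ)
    (l : List (Fin n)) (X : Matrix (Fin k → Fin 2) (Fin k → Fin 2) ℂ)
    (hX : X.IsHermitian) :
    (l.foldl (fun X i => depolPow 2 k p (U i * X * (U i).conjTranspose)) X).IsHermitian ∧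
    (l.foldl (fun X i => depolPow 2 k p (U i * X * (U i).conjTranspose)) X).trace
      = X.trace ∧
    tn X ≤ (1 / (1 - 2*p)) ^ (k * l.length) *
      tn (l.foldl (fun X i => depolPow 2 k p (U i * X * (U i).conjTranspose)) X) := by
  induction l generalizing X with
  | nil => exact ⟨hX, rfl, by simp⟩
  | cons i l ih =>
      have hUi := hU i
      have hconjh : (U i * X * (U i).conjTranspose).IsHermitian := by
        rw [← Matrix.star_eq_conjTranspose]
        exact herm_conj hX
      have htrc : (U i * X * (U i).conjTranspose).trace = X.trace := by
        rw [← Matrix.star_eq_conjTranspose, Matrix.trace_mul_cycle, hUi.1, one_mul]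
      have htn : tn (U i * X * (U i).conjTranspose) = tn X := by
        rw [← Matrix.star_eq_conjTranspose]
        exact tn_conj hUi hX
      obtain ⟨hdh, hdt, hdb⟩ := tn_depolPow_le (by norm_num) hp0 hp hconjh
      obtain ⟨h1, h2, h3⟩ := ih (depolPow 2 k p (U i * X * (U i).conjTranspose)) hdh
      have hc : (0:ℝ) < 1 / (1 - 2*p) := by
        have : (0:ℝ) < 1 - 2*p := by linarith
        positivity
      refine ⟨h1, ?_, ?_⟩
      · rw [List.foldl_cons, h2, hdt, htrc]
      · rw [List.foldl_cons]
        calc tn X = tn (U i * X * (U i).conjTranspose) := htn.symm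
          _ ≤ (1 / (1 - 2*p)) ^ k * tn (depolPow 2 k p (U i * X * (U i).conjTranspose)) :=
              hdb
          _ ≤ (1 / (1 - 2*p)) ^ k * ((1 / (1 - 2*p)) ^ (k * l.length) * tn _) :=
              mul_le_mul_of_nonneg_left h3 (pow_nonneg hc.le k)
          _ = (1 / (1 - 2*p)) ^ (k * (i :: l).length) * tn _ := by
              rw [List.length_cons, ← mul_assoc, ← pow_add]
              congr 2
              ring

end Circuit

end HSAux
/-- Lower bound on trace-distance contraction under local qubit depolarizing noise, and
the resulting lower bound on the trace distance of the outputs of a noisy unitary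
circuit. -/
theorem traceNorm_lower_bound_depolPow (k n : ℕ) (p : ℝ) (hp0 : 0 ≤ p) (hp : p < 1 / 2)
    (U : Fin n → Matrix (Fin k → Fin 2) (Fin k → Fin 2) ℂ)
    (hU : ∀ i, U i ∈ Matrix.unitaryGroup (Fin k → Fin 2) ℂ) :
    (∀ ρ σ : Matrix (Fin k → Fin 2) (Fin k → Fin 2) ℂ, IsDensity ρ → IsDensity σ →
      traceNorm (ρ - σ) ≤
        (1 / (1 - 2 * p)) ^ k * traceNorm (depolPow 2 k p ρ - depolPow 2 k p σ)) ∧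
    (∀ ρ σ : Matrix (Fin k → Fin 2) (Fin k → Fin 2) ℂ, IsDensity ρ → IsDensity σ →
      (1 / 2) * (1 - 2 * p) ^ (k * n) * traceNorm (ρ - σ) ≤
        hsDiv 1 (noisyUnitaryCircuit k n p U ρ) (noisyUnitaryCircuit k n p U σ)) := by
  have h2p : (0:ℝ) < 1 - 2*p := by linarith
  constructor
  · intro ρ σ hρ hσ
    have hX : (ρ - σ).IsHermitian := hρ.1.1.sub hσ.1.1
    obtain ⟨hdh, -, hdb⟩ := HSAux.tn_depolPow_le (by norm_num) hp0 hp hX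
    have hsub : depolPow 2 k p ρ - depolPow 2 k p σ = depolPow 2 k p (ρ - σ) :=
      (map_sub _ _ _).symm
    rw [HSAux.traceNorm_eq_tn hX, hsub, HSAux.traceNorm_eq_tn hdh]
    exact hdb
  · intro ρ σ hρ hσ
    have hX : (ρ - σ).IsHermitian := hρ.1.1.sub hσ.1.1
    obtain ⟨hfh, hft, hfb⟩ := HSAux.circuit_fold U hp0 hp hU (List.finRange n) (ρ - σ) hX
    have hA : noisyUnitaryCircuit k n p U ρ - noisyUnitaryCircuit k n p U σ
        = (List.finRange n).foldl
            (fun X i => depolPow 2 k p (U i * X * (U i).conjTranspose)) (ρ - σ) := by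
      rw [noisyUnitaryCircuit, noisyUnitaryCircuit]
      exact HSAux.circuit_fold_sub U hU (List.finRange n) ρ σ
    have htr0 : ((List.finRange n).foldl
        (fun X i => depolPow 2 k p (U i * X * (U i).conjTranspose)) (ρ - σ)).trace = 0 := by
      rw [hft, Matrix.trace_sub, hρ.2, hσ.2, sub_self]
    have hhs : hsDiv 1 (noisyUnitaryCircuit k n p U ρ) (noisyUnitaryCircuit k n p U σ)
        = (HSAux.tn ((List.finRange n).foldl
            (fun X i => depolPow 2 k p (U i * X * (U i).conjTranspose)) (ρ - σ))) / 2 := by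
      rw [hsDiv, Complex.ofReal_one, one_smul, hA, HSAux.posPartTrace_eq hfh, htr0]
      norm_num
    rw [hhs, HSAux.traceNorm_eq_tn hX]
    rw [List.length_finRange] at hfb
    have hpow : (1 - 2*p)^(k*n) * (1/(1-2*p))^(k*n) = 1 := by
      rw [← mul_pow, mul_one_div, div_self h2p.ne', one_pow]
    have h := mul_le_mul_of_nonneg_left hfb (pow_nonneg h2p.le (k*n))
    rw [← mul_assoc, hpow, one_mul] at h
    linarith
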